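/- In the recursion tree of Quicksort on L' = a :: L (L a list of distinct keys, a fresh), every node whose corresponding recursive call is not determined by the previous computation on L lies on one of two root-to-leaf paths: the rightmost spine of the left subtree of the root or the leftmost spine of the right subtree of the root; hence the number of such 'new' calls is at most 2·depth(Q(L')) + O(1). -/

import Mathlib

/-- The list of inputs to all recursive calls (nodes of the recursion tree)
of head-pivot Quicksort on `L`. -/
def calls : List ℤ → List (List ℤ)
  | [] => []
  | h :: t =>
      (h :: t) :: (calls (t.filter (· < h)) ++ calls (t.filter (h < ·)))
termination_by L => L.length
decreasing_by
  all_goals simp [Nat.lt_succ_iff, List.length_filter_le]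
  all_goals exact le_trans (List.length_filter_le ..) (by simp)

/-- The inputs of the 'new' recursive calls of Quicksort on `L`, given the
set `old` of memoized call inputs: a call whose input is in `old` is skipped
(its result is found in the memo), otherwise it is new and we recurse. -/
def newCalls (old : List (List ℤ)) : List ℤ → List (List ℤ)
  | [] => []
  | h :: t =>
      if (h :: t) ∈ old then []
      else (h :: t) :: (newCalls old (t.filter (· < h)) ++
                        newCalls old (t.filter (h < ·)))
termination_by L => L.length
decreasing_by
  all_goals simp [Nat.lt_succ_iff, List.length_filter_le]
  all_goals exact le_trans (List.length_filter_le ..) (by simp)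

/-- The recursion tree of head-pivot Quicksort. -/
inductive QT : Type
  | leaf : QT
  | node : ℤ → QT → QT → QT

/-- Build the recursion tree of Quicksort on `L`. -/
def qt : List ℤ → QT
  | [] => .leaf
  | h :: t => .node h (qt (t.filter (· < h))) (qt (t.filter (h < ·)))
termination_by L => L.length
decreasing_by
  all_goals simp [Nat.lt_succ_iff, List.length_filter_le]
  all_goals exact le_trans (List.length_filter_le ..) (by simp)

/-- Depth of a recursion tree. -/
def depth : QT → ℕ
  | .leaf => 0
  | .node _ l r => 1 + max (depth l) (depth r)

/-- Pivots along the rightmost spine of a recursion tree. -/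
def rspine : QT → List ℤ
  | .leaf => []
  | .node p _ r => p :: rspine r

/-- Pivots along the leftmost spine of a recursion tree. -/
def lspine : QT → List ℤ
  | .leaf => []
  | .node p l _ => p :: lspine l

lemma newCalls_eq_nil {old : List (List ℤ)} {M : List ℤ} (h : M = [] ∨ M ∈ old) :
    newCalls old M = [] := by
  match M with
  | [] => rw [newCalls]
  | h' :: t =>
    rcases h with h | h
    · exact absurd h (by simp)
    · rw [newCalls, if_pos h]

lemma mem_calls_subset : ∀ (n : ℕ) (X : List ℤ), X.length ≤ n →
    ∀ M ∈ calls X, ∀ x ∈ M, x ∈ X := by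
  intro n
  induction n with
  | zero =>
    intro X hX M hM
    have : X = [] := List.length_eq_zero_iff.mp (Nat.le_zero.mp hX)
    subst this
    rw [calls] at hM
    exact absurd hM (by simp)
  | succ n ih =>
    intro X hX M hM x hx
    match X with
    | [] => rw [calls] at hM; exact absurd hM (by simp)
    | h :: t =>
      rw [calls] at hM
      have hlt : ∀ (g : ℤ → Bool), (t.filter g).length ≤ n := fun g =>
        le_trans (List.length_filter_le _ _) (by simpa using hX)
      rcases List.mem_cons.1 hM with rfl | hM
      · exact hx
      · rcases List.mem_append.1 hM with hM | hM
        · exact List.mem_cons_of_mem _ (List.mem_of_mem_filter (ih _ (hlt _) M hM x hx))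
        · exact List.mem_cons_of_mem _ (List.mem_of_mem_filter (ih _ (hlt _) M hM x hx))

lemma filter_mem_calls : ∀ (n : ℕ) (L A B : List ℤ) (q : ℤ → Bool),
    L.length ≤ n → L = A ++ B →
    (∀ x y z : ℤ, q x = true → q z = true → x ≤ y → y ≤ z → q y = true) →
    (∀ x ∈ A, q x = false) →
    (∀ x ∈ B, q x = false → ∀ w : ℤ, q w = true →
      ∃ y ∈ A, (x < y ∧ y < w) ∨ (w < y ∧ y < x)) →
    B.filter q = [] ∨ B.filter q ∈ calls L := by
  intro n
  induction n with
  | zero =>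
    intro L A B q hlen hL hint hAq h5
    left
    have hB : B = [] := by
      have h1 := Nat.le_zero.mp hlen
      rw [hL, List.length_append] at h1
      exact List.length_eq_zero_iff.mp (by omega)
    subst hB; rfl
  | succ n ih =>
    intro L A B q hlen hL hint hAq h5
    by_cases hw : ∃ w ∈ B, q w = true
    case neg =>
      left
      rw [List.filter_eq_nil_iff]
      intro x hx hqx
      exact hw ⟨x, hx, hqx⟩
    obtain ⟨w, hwB, hqw⟩ := hw
    match A, hL with
    | [], hL =>
      match B, hwB, h5 with
      | h :: t, _, h5 =>
        by_cases hqh : q h = true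
        · right
          have ht : t.filter q = t := by
            rw [List.filter_eq_self]
            intro x hx
            by_contra hqx
            obtain ⟨y, hy, -⟩ := h5 x (List.mem_cons_of_mem _ hx)
              (by simpa using hqx) h hqh
            simp at hy
          have hft : (h :: t).filter q = h :: t := by
            rw [List.filter_cons_of_pos hqh, ht]
          rw [hft, hL, List.nil_append, calls]
          exact List.mem_cons_self
        · obtain ⟨y, hy, -⟩ := h5 h (List.mem_cons_self) (by simpa using hqh) w hqw
          simp at hy
    | c :: A₂, hL =>
      have hqc : q c = false := hAq c (List.mem_cons_self)
      have hlen' : (A₂ ++ B).length ≤ n := by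
        rw [hL] at hlen; simpa using hlen
      have hwc : w < c ∨ c < w := by
        rcases lt_trichotomy w c with h | h | h
        · exact Or.inl h
        · rw [h] at hqw; rw [hqw] at hqc; exact absurd hqc (by simp)
        · exact Or.inr h
      have hAq' : ∀ x ∈ A₂, q x = false := fun x hx => hAq x (List.mem_cons_of_mem _ hx)
      rcases hwc with hlt | hgt
      · -- all q-elements are < c; recurse into the left subcall
        have hside : ∀ z, q z = true → z < c := by
          intro z hz
          by_contra hzc
          push_neg at hzc
          have h1 := hint w c z hqw hz (le_of_lt hlt) hzc
          simp [hqc] at h1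
        have hfe : B.filter q = (B.filter (· < c)).filter q := by
          rw [List.filter_filter]
          refine (List.filter_congr ?_)
          intro a _
          cases hqa : q a with
          | false => simp
          | true => simp [hside a hqa]
        have hrec := ih ((A₂ ++ B).filter (· < c)) (A₂.filter (· < c)) (B.filter (· < c)) q
          (le_trans (List.length_filter_le _ _) hlen')
          (List.filter_append _ _)
          hint
          (fun x hx => hAq' x (List.mem_of_mem_filter hx))
          ?_
        · rw [← hfe] at hrec
          rcases hrec with hnil | hmem
          · exact absurd (List.mem_filter.2 ⟨hwB, hqw⟩) (by simp [hnil])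
          · right
            rw [hL, List.cons_append, calls]
            exact List.mem_cons_of_mem _ (List.mem_append_left _ hmem)
        · intro x hx hqx w' hqw'
          have hxc : x < c := by
            have := (List.mem_filter.1 hx).2; simpa using this
          have hxB : x ∈ B := List.mem_of_mem_filter hx
          obtain ⟨y, hy, hbet⟩ := h5 x hxB hqx w' hqw'
          have hw'c : w' < c := hside w' hqw'
          have hyc : y < c := by rcases hbet with ⟨h1, h2⟩ | ⟨h1, h2⟩ <;> omega
          rcases List.mem_cons.1 hy with rfl | hy
          · omega
          · exact ⟨y, List.mem_filter.2 ⟨hy, by simpa using hyc⟩, hbet⟩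
      · -- all q-elements are > c; recurse into the right subcall
        have hside : ∀ z, q z = true → c < z := by
          intro z hz
          by_contra hzc
          push_neg at hzc
          have h1 := hint z c w hz hqw hzc (le_of_lt hgt)
          simp [hqc] at h1
        have hfe : B.filter q = (B.filter (c < ·)).filter q := by
          rw [List.filter_filter]
          refine (List.filter_congr ?_)
          intro a _
          cases hqa : q a with
          | false => simp
          | true => simp [hside a hqa]
        have hrec := ih ((A₂ ++ B).filter (c < ·)) (A₂.filter (c < ·)) (B.filter (c < ·)) q
          (le_trans (List.length_filter_le _ _) hlen')
          (List.filter_append _ _)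
          hint
          (fun x hx => hAq' x (List.mem_of_mem_filter hx))
          ?_
        · rw [← hfe] at hrec
          rcases hrec with hnil | hmem
          · exact absurd (List.mem_filter.2 ⟨hwB, hqw⟩) (by simp [hnil])
          · right
            rw [hL, List.cons_append, calls]
            exact List.mem_cons_of_mem _ (List.mem_append_right _ hmem)
        · intro x hx hqx w' hqw'
          have hxc : c < x := by
            have := (List.mem_filter.1 hx).2; simpa using this
          have hxB : x ∈ B := List.mem_of_mem_filter hx
          obtain ⟨y, hy, hbet⟩ := h5 x hxB hqx w' hqw'
          have hw'c : c < w' := hside w' hqw'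
          have hyc : c < y := by rcases hbet with ⟨h1, h2⟩ | ⟨h1, h2⟩ <;> omega
          rcases List.mem_cons.1 hy with rfl | hy
          · omega
          · exact ⟨y, List.mem_filter.2 ⟨hy, by simpa using hyc⟩, hbet⟩




lemma newCalls_rspine : ∀ (n : ℕ) (L A B : List ℤ) (q : ℤ → Bool),
    B.length ≤ n → L = A ++ B → L.Nodup →
    (∀ x y z : ℤ, q x = true → q z = true → x ≤ y → y ≤ z → q y = true) →
    (∀ x ∈ A, q x = false) →
    (∀ x ∈ B, q x = false → ∀ w : ℤ, q w = true →
      w < x ∨ ∃ y ∈ A, (x < y ∧ y < w) ∨ (w < y ∧ y < x)) →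
    (∀ M ∈ newCalls (calls L) (B.filter q), ∀ p : ℤ, M.head? = some p →
        p ∈ rspine (qt (B.filter q))) ∧
    (newCalls (calls L) (B.filter q)).length ≤ (rspine (qt (B.filter q))).length := by
  intro n
  induction n with
  | zero =>
    intro L A B q hlen hL hnd hint hAq hs
    have hB : B = [] := List.length_eq_zero_iff.mp (Nat.le_zero.mp hlen)
    subst hB
    rw [List.filter_nil, newCalls_eq_nil (Or.inl rfl)]
    exact ⟨fun M hM => absurd hM (by simp), by simp⟩
  | succ n ih =>
    intro L A B q hlen hL hnd hint hAq hs
    cases hN : B.filter q with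
    | nil =>
      rw [newCalls_eq_nil (Or.inl rfl)]
      exact ⟨fun M hM => absurd hM (by simp), by simp⟩
    | cons p t =>
      by_cases hmem : (p :: t) ∈ calls L
      · rw [newCalls_eq_nil (Or.inr hmem)]
        exact ⟨fun M hM => absurd hM (by simp), by simp⟩
      obtain ⟨A₂, B₂, hB, hA₂, hqp, ht⟩ := List.filter_eq_cons_iff.mp hN
      have hA₂f : ∀ x ∈ A₂, q x = false := fun x hx => by simpa using hA₂ x hx
      have hpB₂ : p ∉ B₂ := by
        have h1 : ((A ++ A₂) ++ (p :: B₂)).Nodup := by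
          rw [hL, hB] at hnd; simpa [List.append_assoc] using hnd
        have h2 : (p :: B₂).Nodup := h1.of_append_right
        exact (List.nodup_cons.mp h2).1
      have hxB : ∀ x ∈ B₂, x ∈ B := fun x hx => by
        rw [hB]; exact List.mem_append_right _ (List.mem_cons_of_mem _ hx)
      have hlen₂ : B₂.length ≤ n := by
        rw [hB] at hlen; simp [List.length_append] at hlen; omega
      have hL' : L = ((A ++ A₂) ++ [p]) ++ B₂ := by
        rw [hL, hB]; simp [List.append_assoc]
      have hmemA : ∀ y ∈ A, y ∈ (A ++ A₂) ++ [p] := fun y hy =>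
        List.mem_append_left _ (List.mem_append_left _ hy)
      have hpA : p ∈ (A ++ A₂) ++ [p] := List.mem_append_right _ (by simp)
      -- the left subcall is memoized
      have hlf : t.filter (· < p) = B₂.filter (fun x => decide (x < p) && q x) := by
        rw [← ht, List.filter_filter]
      have hleftnil : newCalls (calls L) (t.filter (· < p)) = [] := by
        rw [hlf]
        refine newCalls_eq_nil (filter_mem_calls L.length L ((A ++ A₂) ++ [p]) B₂ _
          le_rfl hL' ?_ ?_ ?_)
        · intro x y z hx hz hxy hyz
          simp only [Bool.and_eq_true, decide_eq_true_eq] at hx hz ⊢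
          exact ⟨by omega, hint x y z hx.2 hz.2 hxy hyz⟩
        · intro x hx
          simp only [List.mem_append, List.mem_singleton] at hx
          rcases hx with (hx | hx) | rfl
          · simp [hAq x hx]
          · simp [hA₂f x hx]
          · simp
        · intro x hx hqx w hqw
          simp only [Bool.and_eq_true, decide_eq_true_eq] at hqw
          obtain ⟨hwp, hqw⟩ := hqw
          have hxp : x ≠ p := fun e => hpB₂ (e ▸ hx)
          by_cases hqx' : q x = true
          · have hnlt : ¬ (x < p) := by
              intro h'; simp [h', hqx'] at hqx
            exact ⟨p, hpA, Or.inr ⟨hwp, by omega⟩⟩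
          · have hqxf : q x = false := by simpa using hqx'
            rcases hs x (hxB x hx) hqxf w hqw with h | ⟨y, hy, hbet⟩
            · have hnlt : ¬ (x < p) := by
                intro hxp'
                have h1 := hint w x p hqw hqp (by omega) (by omega)
                simp [h1] at hqxf
              exact ⟨p, hpA, Or.inr ⟨hwp, by omega⟩⟩
            · exact ⟨y, hmemA y hy, hbet⟩
      -- the right subcall recurses along the spine
      have hrf : t.filter (p < ·) = B₂.filter (fun x => decide (p < x) && q x) := by
        rw [← ht, List.filter_filter]
      have hI : ∀ x y z : ℤ, (decide (p < x) && q x) = true → (decide (p < z) && q z) = true →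
          x ≤ y → y ≤ z → (decide (p < y) && q y) = true := by
        intro x y z hx hz hxy hyz
        simp only [Bool.and_eq_true, decide_eq_true_eq] at hx hz ⊢
        exact ⟨by omega, hint x y z hx.2 hz.2 hxy hyz⟩
      have hA' : ∀ x ∈ (A ++ A₂) ++ [p], (decide (p < x) && q x) = false := by
        intro x hx
        simp only [List.mem_append, List.mem_singleton] at hx
        rcases hx with (hx | hx) | rfl
        · simp [hAq x hx]
        · simp [hA₂f x hx]
        · simp
      have hS' : ∀ x ∈ B₂, (decide (p < x) && q x) = false → ∀ w : ℤ,
          (decide (p < w) && q w) = true →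
          w < x ∨ ∃ y ∈ (A ++ A₂) ++ [p], (x < y ∧ y < w) ∨ (w < y ∧ y < x) := by
        intro x hx hqx w hqw
        simp only [Bool.and_eq_true, decide_eq_true_eq] at hqw
        obtain ⟨hpw, hqw⟩ := hqw
        have hxp : x ≠ p := fun e => hpB₂ (e ▸ hx)
        by_cases hqx' : q x = true
        · have hnlt : ¬ (p < x) := by
            intro h'; simp [h', hqx'] at hqx
          exact Or.inr ⟨p, hpA, Or.inl ⟨by omega, by omega⟩⟩
        · have hqxf : q x = false := by simpa using hqx'
          rcases hs x (hxB x hx) hqxf w hqw with h | ⟨y, hy, hbet⟩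
          · exact Or.inl h
          · exact Or.inr ⟨y, hmemA y hy, hbet⟩
      have ihr := ih L ((A ++ A₂) ++ [p]) B₂ (fun x => decide (p < x) && q x)
        hlen₂ hL' hnd hI hA' hS'
      rw [← hrf] at ihr
      have hunf : newCalls (calls L) (p :: t) =
          (p :: t) :: (newCalls (calls L) (t.filter (· < p)) ++
                       newCalls (calls L) (t.filter (p < ·))) := by
        rw [newCalls, if_neg hmem]
      have hrsp : rspine (qt (p :: t)) = p :: rspine (qt (t.filter (p < ·))) := by
        rw [qt]; rfl
      constructor
      · intro M hM p' hp'
        rw [hunf] at hM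
        rw [hrsp]
        rcases List.mem_cons.mp hM with rfl | hM
        · simp only [List.head?_cons, Option.some.injEq] at hp'
          subst hp'
          exact List.mem_cons_self
        · rw [hleftnil, List.nil_append] at hM
          exact List.mem_cons_of_mem _ (ihr.1 M hM p' hp')
      · rw [hunf, hrsp, hleftnil]
        simpa using ihr.2

lemma newCalls_lspine : ∀ (n : ℕ) (L A B : List ℤ) (q : ℤ → Bool),
    B.length ≤ n → L = A ++ B → L.Nodup →
    (∀ x y z : ℤ, q x = true → q z = true → x ≤ y → y ≤ z → q y = true) →
    (∀ x ∈ A, q x = false) →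
    (∀ x ∈ B, q x = false → ∀ w : ℤ, q w = true →
      x < w ∨ ∃ y ∈ A, (x < y ∧ y < w) ∨ (w < y ∧ y < x)) →
    (∀ M ∈ newCalls (calls L) (B.filter q), ∀ p : ℤ, M.head? = some p →
        p ∈ lspine (qt (B.filter q))) ∧
    (newCalls (calls L) (B.filter q)).length ≤ (lspine (qt (B.filter q))).length := by
  intro n
  induction n with
  | zero =>
    intro L A B q hlen hL hnd hint hAq hs
    have hB : B = [] := List.length_eq_zero_iff.mp (Nat.le_zero.mp hlen)
    subst hB
    rw [List.filter_nil, newCalls_eq_nil (Or.inl rfl)]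
    exact ⟨fun M hM => absurd hM (by simp), by simp⟩
  | succ n ih =>
    intro L A B q hlen hL hnd hint hAq hs
    cases hN : B.filter q with
    | nil =>
      rw [newCalls_eq_nil (Or.inl rfl)]
      exact ⟨fun M hM => absurd hM (by simp), by simp⟩
    | cons p t =>
      by_cases hmem : (p :: t) ∈ calls L
      · rw [newCalls_eq_nil (Or.inr hmem)]
        exact ⟨fun M hM => absurd hM (by simp), by simp⟩
      obtain ⟨A₂, B₂, hB, hA₂, hqp, ht⟩ := List.filter_eq_cons_iff.mp hN
      have hA₂f : ∀ x ∈ A₂, q x = false := fun x hx => by simpa using hA₂ x hx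
      have hpB₂ : p ∉ B₂ := by
        have h1 : ((A ++ A₂) ++ (p :: B₂)).Nodup := by
          rw [hL, hB] at hnd; simpa [List.append_assoc] using hnd
        have h2 : (p :: B₂).Nodup := h1.of_append_right
        exact (List.nodup_cons.mp h2).1
      have hxB : ∀ x ∈ B₂, x ∈ B := fun x hx => by
        rw [hB]; exact List.mem_append_right _ (List.mem_cons_of_mem _ hx)
      have hlen₂ : B₂.length ≤ n := by
        rw [hB] at hlen; simp [List.length_append] at hlen; omega
      have hL' : L = ((A ++ A₂) ++ [p]) ++ B₂ := by
        rw [hL, hB]; simp [List.append_assoc]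
      have hmemA : ∀ y ∈ A, y ∈ (A ++ A₂) ++ [p] := fun y hy =>
        List.mem_append_left _ (List.mem_append_left _ hy)
      have hpA : p ∈ (A ++ A₂) ++ [p] := List.mem_append_right _ (by simp)
      -- the right subcall is memoized
      have hrf : t.filter (p < ·) = B₂.filter (fun x => decide (p < x) && q x) := by
        rw [← ht, List.filter_filter]
      have hrightnil : newCalls (calls L) (t.filter (p < ·)) = [] := by
        rw [hrf]
        refine newCalls_eq_nil (filter_mem_calls L.length L ((A ++ A₂) ++ [p]) B₂ _
          le_rfl hL' ?_ ?_ ?_)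
        · intro x y z hx hz hxy hyz
          simp only [Bool.and_eq_true, decide_eq_true_eq] at hx hz ⊢
          exact ⟨by omega, hint x y z hx.2 hz.2 hxy hyz⟩
        · intro x hx
          simp only [List.mem_append, List.mem_singleton] at hx
          rcases hx with (hx | hx) | rfl
          · simp [hAq x hx]
          · simp [hA₂f x hx]
          · simp
        · intro x hx hqx w hqw
          simp only [Bool.and_eq_true, decide_eq_true_eq] at hqw
          obtain ⟨hpw, hqw⟩ := hqw
          have hxp : x ≠ p := fun e => hpB₂ (e ▸ hx)
          by_cases hqx' : q x = true
          · have hnlt : ¬ (p < x) := by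
              intro h'; simp [h', hqx'] at hqx
            exact ⟨p, hpA, Or.inl ⟨by omega, by omega⟩⟩
          · have hqxf : q x = false := by simpa using hqx'
            rcases hs x (hxB x hx) hqxf w hqw with h | ⟨y, hy, hbet⟩
            · have hnlt : ¬ (p < x) := by
                intro hxp'
                have h1 := hint p x w hqp hqw (by omega) (by omega)
                simp [h1] at hqxf
              exact ⟨p, hpA, Or.inl ⟨by omega, by omega⟩⟩
            · exact ⟨y, hmemA y hy, hbet⟩
      -- the left subcall recurses along the spine
      have hlf : t.filter (· < p) = B₂.filter (fun x => decide (x < p) && q x) := by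
        rw [← ht, List.filter_filter]
      have hI : ∀ x y z : ℤ, (decide (x < p) && q x) = true → (decide (z < p) && q z) = true →
          x ≤ y → y ≤ z → (decide (y < p) && q y) = true := by
        intro x y z hx hz hxy hyz
        simp only [Bool.and_eq_true, decide_eq_true_eq] at hx hz ⊢
        exact ⟨by omega, hint x y z hx.2 hz.2 hxy hyz⟩
      have hA' : ∀ x ∈ (A ++ A₂) ++ [p], (decide (x < p) && q x) = false := by
        intro x hx
        simp only [List.mem_append, List.mem_singleton] at hx
        rcases hx with (hx | hx) | rfl
        · simp [hAq x hx]
        · simp [hA₂f x hx]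
        · simp
      have hS' : ∀ x ∈ B₂, (decide (x < p) && q x) = false → ∀ w : ℤ,
          (decide (w < p) && q w) = true →
          x < w ∨ ∃ y ∈ (A ++ A₂) ++ [p], (x < y ∧ y < w) ∨ (w < y ∧ y < x) := by
        intro x hx hqx w hqw
        simp only [Bool.and_eq_true, decide_eq_true_eq] at hqw
        obtain ⟨hwp, hqw⟩ := hqw
        have hxp : x ≠ p := fun e => hpB₂ (e ▸ hx)
        by_cases hqx' : q x = true
        · have hnlt : ¬ (x < p) := by
            intro h'; simp [h', hqx'] at hqx
          exact Or.inr ⟨p, hpA, Or.inr ⟨by omega, by omega⟩⟩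
        · have hqxf : q x = false := by simpa using hqx'
          rcases hs x (hxB x hx) hqxf w hqw with h | ⟨y, hy, hbet⟩
          · exact Or.inl h
          · exact Or.inr ⟨y, hmemA y hy, hbet⟩
      have ihr := ih L ((A ++ A₂) ++ [p]) B₂ (fun x => decide (x < p) && q x)
        hlen₂ hL' hnd hI hA' hS'
      rw [← hlf] at ihr
      have hunf : newCalls (calls L) (p :: t) =
          (p :: t) :: (newCalls (calls L) (t.filter (· < p)) ++
                       newCalls (calls L) (t.filter (p < ·))) := by
        rw [newCalls, if_neg hmem]
      have hlsp : lspine (qt (p :: t)) = p :: lspine (qt (t.filter (· < p))) := by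
        rw [qt]; rfl
      constructor
      · intro M hM p' hp'
        rw [hunf] at hM
        rw [hlsp]
        rcases List.mem_cons.mp hM with rfl | hM
        · simp only [List.head?_cons, Option.some.injEq] at hp'
          subst hp'
          exact List.mem_cons_self
        · rw [hrightnil, List.append_nil] at hM
          exact List.mem_cons_of_mem _ (ihr.1 M hM p' hp')
      · rw [hunf, hlsp, hrightnil]
        simpa using ihr.2


lemma rspine_length_le : ∀ T : QT, (rspine T).length ≤ depth T := by
  intro T
  induction T with
  | leaf => simp [rspine, depth]
  | node p l r ihl ihr =>
    simp only [rspine, depth, List.length_cons]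
    have := le_max_right (depth l) (depth r)
    omega

lemma lspine_length_le : ∀ T : QT, (lspine T).length ≤ depth T := by
  intro T
  induction T with
  | leaf => simp [lspine, depth]
  | node p l r ihl ihr =>
    simp only [lspine, depth, List.length_cons]
    have := le_max_left (depth l) (depth r)
    omega


/-- For `L' = a :: L` (`L` distinct, `a` fresh), every call of Quicksort on
`L'` not determined by the previous computation on `L` has its pivot at the
root (pivot `a`), on the rightmost spine of the left subtree of the root, or
on the leftmost spine of the right subtree of the root; hence the number of
new calls is at most `2 · depth (Q(L')) + 1`. -/
theorem stmt19 (L : List ℤ) (hnd : L.Nodup) (a : ℤ) (ha : a ∉ L) :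
    (∀ M ∈ newCalls (calls L) (a :: L), ∀ p : ℤ, M.head? = some p →
      p = a ∨ p ∈ rspine (qt (L.filter (· < a))) ∨
        p ∈ lspine (qt (L.filter (a < ·)))) ∧
    (newCalls (calls L) (a :: L)).length ≤ 2 * depth (qt (a :: L)) + 1 := by
  have hroot : (a :: L) ∉ calls L := fun h =>
    ha (mem_calls_subset L.length L le_rfl _ h a (List.mem_cons_self))
  have hunf : newCalls (calls L) (a :: L) =
      (a :: L) :: (newCalls (calls L) (L.filter (· < a)) ++
                   newCalls (calls L) (L.filter (a < ·))) := by
    rw [newCalls, if_neg hroot]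
  have hrs := newCalls_rspine L.length L [] L (fun x => decide (x < a)) le_rfl
    (List.nil_append L).symm hnd
    (by intro x y z hx hz hxy hyz; simp only [decide_eq_true_eq] at hx hz ⊢; omega)
    (by intro x hx; exact absurd hx (List.not_mem_nil))
    (by
      intro x hx hqx w hqw
      simp only [decide_eq_false_iff_not, not_lt] at hqx
      simp only [decide_eq_true_eq] at hqw
      have hxa : x ≠ a := fun e => ha (e ▸ hx)
      left; omega)
  have hls := newCalls_lspine L.length L [] L (fun x => decide (a < x)) le_rfl
    (List.nil_append L).symm hnd
    (by intro x y z hx hz hxy hyz; simp only [decide_eq_true_eq] at hx hz ⊢; omega)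
    (by intro x hx; exact absurd hx (List.not_mem_nil))
    (by
      intro x hx hqx w hqw
      simp only [decide_eq_false_iff_not, not_lt] at hqx
      simp only [decide_eq_true_eq] at hqw
      have hxa : x ≠ a := fun e => ha (e ▸ hx)
      left; omega)
  constructor
  · intro M hM p hp
    rw [hunf] at hM
    rcases List.mem_cons.mp hM with rfl | hM
    · simp only [List.head?_cons, Option.some.injEq] at hp
      exact Or.inl hp.symm
    · rcases List.mem_append.mp hM with h | h
      · exact Or.inr (Or.inl (hrs.1 M h p hp))
      · exact Or.inr (Or.inr (hls.1 M h p hp))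
  · rw [hunf]
    have hq : qt (a :: L) = .node a (qt (L.filter (· < a))) (qt (L.filter (a < ·))) := by
      rw [qt]
    rw [hq]
    have h1 := hrs.2
    have h2 := hls.2
    have h3 := rspine_length_le (qt (L.filter (· < a)))
    have h4 := lspine_length_le (qt (L.filter (a < ·)))
    have h5 := le_max_left (depth (qt (L.filter (· < a)))) (depth (qt (L.filter (a < ·))))
    have h6 := le_max_right (depth (qt (L.filter (· < a)))) (depth (qt (L.filter (a < ·))))
    simp only [List.length_cons, List.length_append, depth]
    omega
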